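/- Let D = (V, A) be the directed graph of a finite simple graph G = (V,E). Let s : V × V → ℝ_{>0} be symmetric (s(v,w) = s(w,v)) and let t_B > 0 be given for every proper nonempty subset B ⊊ V. Define, for each arc (v→w) ∈ A, P_{v→w} = s(v,w) · Π_{B : v∈B, w∉B} t_B · Π_{B : w∈B, v∉B} t_B^{-1}, and define κ(v) = Π_{B : v∈B} t_B^{-2}. Then the detailed balance equations κ(v) P_{v→w} = κ(w) P_{w→v} hold for every arc (v→w) ∈ A. -/

import Mathlib

open Finset

/-- the monomial parameterization
`P_{v→w} = s(v,w) Π_{B : v∈B, w∉B} t_B Π_{B : w∈B, v∉B} t_B⁻¹`, with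
`κ(v) = Π_{B : v∈B} t_B^{-2}`, satisfies the detailed balance equations on every arc. -/
theorem stmt_14 {V : Type*} [Fintype V] [DecidableEq V]
    (G : SimpleGraph V)
    (s : V → V → ℝ) (hspos : ∀ v w, 0 < s v w) (hssym : ∀ v w, s v w = s w v)
    (t : Finset V → ℝ) (ht : ∀ B, 0 < t B)
    (P : V → V → ℝ)
    (hP : ∀ v w, G.Adj v w → P v w =
      s v w * (∏ B ∈ univ.filter
          (fun B : Finset V => B.Nonempty ∧ B ≠ Finset.univ ∧ v ∈ B ∧ w ∉ B), t B)
        * (∏ B ∈ univ.filter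
          (fun B : Finset V => B.Nonempty ∧ B ≠ Finset.univ ∧ w ∈ B ∧ v ∉ B), t B)⁻¹)
    (κ : V → ℝ)
    (hκ : ∀ v, κ v = ∏ B ∈ univ.filter
        (fun B : Finset V => B.Nonempty ∧ B ≠ Finset.univ ∧ v ∈ B), (t B) ^ (-2 : ℤ)) :
    ∀ v w, G.Adj v w → κ v * P v w = κ w * P w v := by
  intro v w hadj
  have hadj' := hadj.symm
  rw [hP v w hadj, hP w v hadj', hκ v, hκ w, hssym v w]
  -- names for the filters
  set A := univ.filter (fun B : Finset V => B.Nonempty ∧ B ≠ Finset.univ ∧ v ∈ B ∧ w ∉ B) with hA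
  set C := univ.filter (fun B : Finset V => B.Nonempty ∧ B ≠ Finset.univ ∧ w ∈ B ∧ v ∉ B) with hC
  set M := univ.filter (fun B : Finset V => B.Nonempty ∧ B ≠ Finset.univ ∧ v ∈ B ∧ w ∈ B) with hM
  have hdisjA : Disjoint A M := by
    rw [Finset.disjoint_left]; intro B hB hB'
    simp [hA, hM] at hB hB'; tauto
  have hdisjC : Disjoint C M := by
    rw [Finset.disjoint_left]; intro B hB hB'
    simp [hC, hM] at hB hB'; tauto
  have hv : univ.filter (fun B : Finset V => B.Nonempty ∧ B ≠ Finset.univ ∧ v ∈ B)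
      = A ∪ M := by
    ext B; simp [hA, hM]; tauto
  have hw : univ.filter (fun B : Finset V => B.Nonempty ∧ B ≠ Finset.univ ∧ w ∈ B)
      = C ∪ M := by
    ext B; simp [hC, hM]; tauto
  rw [hv, hw, Finset.prod_union hdisjA, Finset.prod_union hdisjC]
  have hZ : ∀ (S : Finset (Finset V)), ∏ B ∈ S, t B ^ (-2 : ℤ)
      = ((∏ B ∈ S, t B) * (∏ B ∈ S, t B))⁻¹ := by
    intro S
    rw [← Finset.prod_mul_distrib, ← Finset.prod_inv_distrib]
    refine Finset.prod_congr rfl fun B _ => ?_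
    rw [zpow_neg, ← inv_inv ((t B * t B)⁻¹)]
    norm_num [sq, zpow_two]
  rw [hZ A, hZ C, hZ M]
  have hpos : ∀ (S : Finset (Finset V)), (0:ℝ) < ∏ B ∈ S, t B :=
    fun S => Finset.prod_pos fun B _ => ht B
  have ha := (hpos A).ne'
  have hc := (hpos C).ne'
  have hm := (hpos M).ne'
  field_simp
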